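/- Let Ω, Ω_1, …, Ω_n (n ≥ 2) be nonempty closed convex subsets of ℝ^m, let F ⊆ ℝ^m be a closed, bounded, convex set with 0 in its interior, and let T(x) := Σ_{i=1}^n T^F_{Ω_i}(x). Assume the solution set S := {x ∈ Ω : T(x) = inf_{y∈Ω} T(y)} is nonempty. Let α_k > 0 satisfy Σ_{k=1}^∞ α_k = ∞ and Σ_{k=1}^∞ α_k² < ∞, let x_1 ∈ Ω, and define x_{k+1} := P(x_k − α_k Σ_{i=1}^n q_{ik}; Ω), where for each i and k: q_{ik} is any element of (−∂ρ_F(ω_{ik} − x_k)) ∩ N(ω_{ik};Ω_i) for some ω_{ik} ∈ Π^F_{Ω_i}(x_k) if x_k ∉ Ω_i, and q_{ik} := 0 if x_k ∈ Ω_i. Then: (1) the sequence {x_k} converges to an optimal solution of the problem minimize T over Ω; (2) the values V_k := min{T(x_j) : j = 1, …, k} converge to the optimal value V̂ := inf_{x∈Ω} T(x); and (3) for every L ≥ 0 such that T is L-Lipschitz on ℝ^m, one has V_k − V̂ ≤ (d(x_1;S)² + L² Σ_{i=1}^k α_i²)/(2 Σ_{i=1}^k α_i) for all k. -/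

import Mathlib

open Set Metric Bornology Pointwise Filter Topology
open scoped RealInnerProductSpace

/-- The minimal time function `T^F_Q(x) = inf {t ≥ 0 : Q ∩ (x + tF) ≠ ∅}`. -/
noncomputable def minTime {X : Type*} [NormedAddCommGroup X] [NormedSpace ℝ X]
    (F Q : Set X) (x : X) : ℝ :=
  sInf {t : ℝ | 0 ≤ t ∧ (Q ∩ ({x} + t • F)).Nonempty}

/-- The normal cone of convex analysis to a convex set `C` at `x̄ ∈ C`. -/
def convexNormalCone {X : Type*} [NormedAddCommGroup X] [InnerProductSpace ℝ X]
    (C : Set X) (xbar : X) : Set X :=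
  {v | ∀ x ∈ C, ⟪v, x - xbar⟫ ≤ 0}

/-- The subdifferential of convex analysis of `φ` at `x̄`. -/
def convexSubdiff {X : Type*} [NormedAddCommGroup X] [InnerProductSpace ℝ X]
    (φ : X → ℝ) (xbar : X) : Set X :=
  {v | ∀ x, ⟪v, x - xbar⟫ ≤ φ x - φ xbar}

section Aux
variable {X : Type*} [NormedAddCommGroup X] [NormedSpace ℝ X] {F Q : Set X} {x y u : X}

lemma mem_singleton_add {A : Set X} : u ∈ {x} + A ↔ u - x ∈ A := by
  simp only [Set.singleton_add, Set.mem_image]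
  constructor
  · rintro ⟨b, hb, rfl⟩; simpa using hb
  · intro h; exact ⟨u - x, h, by abel⟩

lemma minTime_bddBelow : BddBelow {t : ℝ | 0 ≤ t ∧ (Q ∩ ({x} + t • F)).Nonempty} :=
  ⟨0, fun _ ht => ht.1⟩

lemma minTime_nonneg (F Q : Set X) (x : X) : 0 ≤ minTime F Q x :=
  Real.sInf_nonneg fun _ ht => ht.1

lemma smul_set_mono_of_le (hF : Convex ℝ F) (h0 : (0 : X) ∈ F) {a b : ℝ}
    (ha : 0 ≤ a) (hab : a ≤ b) : a • F ⊆ b • F := by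
  rcases eq_or_lt_of_le (ha.trans hab) with hb | hb
  · have : a = b := le_antisymm hab (hb ▸ ha)
    simp [this]
  rintro z ⟨f, hf, rfl⟩
  refine ⟨(a / b) • f, ?_, ?_⟩
  · have h1 : (0:ℝ) ≤ a / b := div_nonneg ha hb.le
    have h2 : (0:ℝ) ≤ 1 - a / b := by
      have := (div_le_one hb).mpr hab; linarith
    have := hF hf h0 h1 h2 (by ring)
    simpa using this
  · simp [smul_smul, mul_div_cancel₀ _ hb.ne']

lemma minTime_le_gauge (hF : Convex ℝ F) (hF0 : (0 : X) ∈ interior F)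
    (hu : u ∈ Q) : minTime F Q x ≤ gauge F (u - x) := by
  have habs : Absorbent ℝ F := absorbent_nhds_zero (mem_interior_iff_mem_nhds.1 hF0)
  refine le_of_forall_pos_le_add fun ε hε => ?_
  have hlt : gauge F (u - x) < gauge F (u - x) + ε := by linarith
  obtain ⟨b, hb0, hbε, hbm⟩ := exists_lt_of_gauge_lt habs hlt
  refine csInf_le minTime_bddBelow ⟨add_nonneg (gauge_nonneg _) hε.le, u, hu, ?_⟩
  exact mem_singleton_add.2
    (smul_set_mono_of_le hF (interior_subset hF0) hb0.le hbε.le hbm)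

lemma minTime_set_nonempty (hF0 : (0 : X) ∈ interior F) (hQ : Q.Nonempty) :
    {t : ℝ | 0 ≤ t ∧ (Q ∩ ({x} + t • F)).Nonempty}.Nonempty := by
  obtain ⟨q, hq⟩ := hQ
  obtain ⟨r, hr, hrF⟩ := Metric.mem_nhds_iff.1 (mem_interior_iff_mem_nhds.1 hF0)
  set t : ℝ := ‖q - x‖ / r + 1 with ht
  have ht0 : 0 < t := by positivity
  refine ⟨t, ht0.le, q, hq, mem_singleton_add.2 ⟨t⁻¹ • (q - x), ?_, ?_⟩⟩
  · apply hrF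
    simp only [Metric.mem_ball, dist_zero_right, norm_smul, Real.norm_eq_abs,
      abs_inv, abs_of_pos ht0]
    rw [inv_mul_lt_iff₀ ht0]
    have : ‖q - x‖ < t * r := by
      rw [ht]; rw [add_mul, div_mul_cancel₀ _ hr.ne']; linarith
    linarith [this]
  · simp [smul_smul, mul_inv_cancel₀ ht0.ne']

lemma exists_gauge_lt (hF : Convex ℝ F) (hF0 : (0 : X) ∈ interior F)
    (hQ : Q.Nonempty) {ε : ℝ} (hε : 0 < ε) :
    ∃ u ∈ Q, gauge F (u - x) < minTime F Q x + ε := by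
  have hne := minTime_set_nonempty (x := x) hF0 hQ
  have : sInf {t : ℝ | 0 ≤ t ∧ (Q ∩ ({x} + t • F)).Nonempty} < minTime F Q x + ε :=
    lt_add_of_le_of_pos le_rfl hε
  obtain ⟨t, ⟨ht0, u, hu, hmem⟩, htlt⟩ := exists_lt_of_csInf_lt hne this
  exact ⟨u, hu, lt_of_le_of_lt (gauge_le_of_mem ht0 (mem_singleton_add.1 hmem)) htlt⟩

lemma minTime_eq_zero_of_mem (hFne : F.Nonempty) (hx : x ∈ Q) :
    minTime F Q x = 0 := by
  refine le_antisymm (csInf_le minTime_bddBelow ⟨le_rfl, x, hx, ?_⟩) (minTime_nonneg _ _ _)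
  rw [Set.zero_smul_set hFne]
  exact mem_singleton_add.2 (by simp)

lemma minTime_le_minTime_add (hF : Convex ℝ F) (hF0 : (0 : X) ∈ interior F)
    (hQ : Q.Nonempty) : minTime F Q x ≤ minTime F Q y + gauge F (y - x) := by
  have habs : Absorbent ℝ F := absorbent_nhds_zero (mem_interior_iff_mem_nhds.1 hF0)
  refine le_of_forall_pos_le_add fun ε hε => ?_
  obtain ⟨u, hu, hlt⟩ := exists_gauge_lt (x := y) hF hF0 hQ hε
  calc minTime F Q x ≤ gauge F (u - x) := minTime_le_gauge hF hF0 hu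
    _ ≤ gauge F (u - y) + gauge F (y - x) := by
        have := gauge_add_le hF habs (u - y) (y - x)
        simpa using this
    _ ≤ minTime F Q y + gauge F (y - x) + ε := by linarith

lemma gauge_le_norm_div {r : ℝ} (hr : 0 < r) (hrF : Metric.ball (0 : X) r ⊆ F) (z : X) :
    gauge F z ≤ ‖z‖ / r := by
  have := gauge_mono (absorbent_ball_zero hr) hrF z
  rwa [gauge_ball hr.le] at this

end Aux

section Aux2
variable {X : Type*} [NormedAddCommGroup X] [InnerProductSpace ℝ X] {F Q : Set X} {x y u : X}

example (hF : Convex ℝ F) (hF0 : (0:X) ∈ interior F) : True := trivial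

lemma subdiff_norm_le {φ : X → ℝ} {L : ℝ} (hL : 0 ≤ L)
    (hlip : ∀ u w : X, |φ u - φ w| ≤ L * ‖u - w‖) {v : X} {z : X}
    (hv : v ∈ convexSubdiff φ z) : ‖v‖ ≤ L := by
  have h1 := hv (z + v)
  simp only [add_sub_cancel_left] at h1
  rw [real_inner_self_eq_norm_sq] at h1
  have h2 : |φ (z + v) - φ z| ≤ L * ‖v‖ := by
    have := hlip (z + v) z
    simpa using this
  have h3 : ‖v‖ ^ 2 ≤ L * ‖v‖ := le_trans h1 (le_trans (le_abs_self _) h2)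
  rcases eq_or_lt_of_le (norm_nonneg v) with h | h
  · rw [← h]; exact hL
  · nlinarith

lemma zero_mem_subdiff_minTime (hFne : F.Nonempty) (hx : x ∈ Q) :
    (0 : X) ∈ convexSubdiff (minTime F Q) x := by
  intro z
  rw [minTime_eq_zero_of_mem hFne hx]
  simpa using minTime_nonneg F Q z

lemma mem_subdiff_minTime (hF : Convex ℝ F) (hF0 : (0 : X) ∈ interior F)
    (hQ : Q.Nonempty) {ω v : X} (hω : ω ∈ Q ∩ ({x} + minTime F Q x • F))
    (hv : v ∈ -(convexSubdiff (gauge F) (ω - x))) (hnc : v ∈ convexNormalCone Q ω) :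
    v ∈ convexSubdiff (minTime F Q) x := by
  rw [Set.mem_neg] at hv
  intro z
  refine le_of_forall_pos_le_add fun ε hε => ?_
  obtain ⟨u, hu, hlt⟩ := exists_gauge_lt (x := z) hF hF0 hQ hε
  have h1 : ⟪-v, (u - z) - (ω - x)⟫ ≤ gauge F (u - z) - gauge F (ω - x) := hv (u - z)
  have h2 : ⟪v, u - ω⟫ ≤ 0 := hnc u hu
  have h3 : minTime F Q x ≤ gauge F (ω - x) := minTime_le_gauge hF hF0 hω.1
  have h4 : ⟪v, z - x⟫ = ⟪-v, (u - z) - (ω - x)⟫ + ⟪v, u - ω⟫ := by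
    have : (z : X) - x = -((u - z) - (ω - x)) + (u - ω) := by abel
    rw [this, inner_add_right, inner_neg_right, inner_neg_left]
  rw [h4]
  have := hlt
  linarith

end Aux2
set_option maxHeartbeats 4000000

/-- The subgradient algorithm for the generalized Heron problem in `ℝ^m`:
convergence of the iterates to an optimal solution, convergence of the record
values to the optimal value, and the standard a priori error estimate. -/
theorem heron_subgradient_algorithm
    (m n : ℕ) (hn : 2 ≤ n)
    (Ω : Set (EuclideanSpace ℝ (Fin m))) (hΩne : Ω.Nonempty) (hΩc : IsClosed Ω)
    (hΩconv : Convex ℝ Ω)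
    (Ωi : Fin n → Set (EuclideanSpace ℝ (Fin m))) (hΩine : ∀ i, (Ωi i).Nonempty)
    (hΩic : ∀ i, IsClosed (Ωi i)) (hΩiconv : ∀ i, Convex ℝ (Ωi i))
    (F : Set (EuclideanSpace ℝ (Fin m))) (hFc : IsClosed F) (hFb : IsBounded F)
    (hFconv : Convex ℝ F) (hF0 : (0 : EuclideanSpace ℝ (Fin m)) ∈ interior F)
    (T : EuclideanSpace ℝ (Fin m) → ℝ) (hT : T = fun x => ∑ i, minTime F (Ωi i) x)
    (S : Set (EuclideanSpace ℝ (Fin m))) (hS : S = {x ∈ Ω | ∀ y ∈ Ω, T x ≤ T y})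
    (hSne : S.Nonempty)
    (α : ℕ → ℝ) (hα : ∀ k, 0 < α k)
    (hdiv : Tendsto (fun N => ∑ k ∈ Finset.range N, α k) atTop atTop)
    (hsq : Summable fun k => (α k) ^ 2)
    (x : ℕ → EuclideanSpace ℝ (Fin m)) (hx0 : x 0 ∈ Ω)
    (q : Fin n → ℕ → EuclideanSpace ℝ (Fin m))
    (hq0 : ∀ i k, x k ∈ Ωi i → q i k = 0)
    (hq : ∀ i k, x k ∉ Ωi i →
      ∃ ω ∈ Ωi i ∩ ({x k} + minTime F (Ωi i) (x k) • F),
        q i k ∈ (-(convexSubdiff (gauge F) (ω - x k))) ∩ convexNormalCone (Ωi i) ω)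
    (hiter : ∀ k, x (k + 1) ∈ Ω ∧
      ‖(x k - α k • ∑ i, q i k) - x (k + 1)‖ =
        infDist (x k - α k • ∑ i, q i k) Ω)
    (V : ℕ → ℝ) (hV : ∀ k, V k = ⨅ j : Fin (k + 1), T (x j)) :
    (∃ xbar ∈ S, Tendsto x atTop (nhds xbar)) ∧
    Tendsto V atTop (nhds (sInf (T '' Ω))) ∧
    (∀ L : ℝ, 0 ≤ L → (∀ u w : EuclideanSpace ℝ (Fin m), |T u - T w| ≤ L * ‖u - w‖) →
      ∀ k, V k - sInf (T '' Ω) ≤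
        (infDist (x 0) S ^ 2 + L ^ 2 * ∑ i ∈ Finset.range (k + 1), α i ^ 2) /
          (2 * ∑ i ∈ Finset.range (k + 1), α i)) := by
  classical
  obtain ⟨r, hr, hrF⟩ : ∃ r > 0, Metric.ball (0 : EuclideanSpace ℝ (Fin m)) r ⊆ F :=
    Metric.mem_nhds_iff.1 (mem_interior_iff_mem_nhds.1 hF0)
  have h0F : (0 : EuclideanSpace ℝ (Fin m)) ∈ F := interior_subset hF0
  have hFne : F.Nonempty := ⟨0, h0F⟩
  -- Lipschitz bound for each minimal time function
  have hmlip : ∀ (i : Fin n) (u w : EuclideanSpace ℝ (Fin m)),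
      |minTime F (Ωi i) u - minTime F (Ωi i) w| ≤ (1 / r) * ‖u - w‖ := by
    intro i u w
    have key : ∀ a b : EuclideanSpace ℝ (Fin m),
        minTime F (Ωi i) a - minTime F (Ωi i) b ≤ (1 / r) * ‖a - b‖ := by
      intro a b
      have h1 := minTime_le_minTime_add (x := a) (y := b) hFconv hF0 (hΩine i)
      have h2 := gauge_le_norm_div hr hrF (b - a)
      have h3 : ‖b - a‖ = ‖a - b‖ := norm_sub_rev _ _
      have h4 : ‖b - a‖ / r = (1 / r) * ‖a - b‖ := by rw [h3]; ring
      linarith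
    rw [abs_sub_le_iff]
    exact ⟨key u w, by have := key w u; rwa [norm_sub_rev] at this⟩
  set L₀ : ℝ := (n : ℝ) / r with hL₀def
  have hL₀ : 0 ≤ L₀ := by positivity
  have hTlip : ∀ u w, |T u - T w| ≤ L₀ * ‖u - w‖ := by
    intro u w
    rw [hT]
    simp only
    rw [← Finset.sum_sub_distrib]
    refine (Finset.abs_sum_le_sum_abs _ _).trans ?_
    refine le_trans (Finset.sum_le_sum fun i _ => hmlip i u w) ?_
    rw [Finset.sum_const, Finset.card_univ, Fintype.card_fin, nsmul_eq_mul, hL₀def]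
    ring_nf
    exact le_rfl
  have hTcont : Continuous T := by
    have : LipschitzWith (Real.toNNReal L₀) T := by
      apply LipschitzWith.of_dist_le_mul
      intro u w
      rw [Real.dist_eq, dist_eq_norm]
      refine le_trans (hTlip u w) ?_
      rw [Real.coe_toNNReal L₀ hL₀]
    exact this.continuous
  -- subgradient property
  set g : ℕ → EuclideanSpace ℝ (Fin m) := fun k => ∑ i, q i k with hg
  have hsubT : ∀ k, g k ∈ convexSubdiff T (x k) := by
    intro k z
    have hterm : ∀ i : Fin n,
        ⟪q i k, z - x k⟫ ≤ minTime F (Ωi i) z - minTime F (Ωi i) (x k) := by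
      intro i
      by_cases hxi : x k ∈ Ωi i
      · rw [hq0 i k hxi]
        exact zero_mem_subdiff_minTime hFne hxi z
      · obtain ⟨ω, hω, hmem⟩ := hq i k hxi
        exact mem_subdiff_minTime hFconv hF0 (hΩine i) hω hmem.1 hmem.2 z
    calc ⟪g k, z - x k⟫ = ∑ i, ⟪q i k, z - x k⟫ := sum_inner _ _ _
      _ ≤ ∑ i, (minTime F (Ωi i) z - minTime F (Ωi i) (x k)) :=
          Finset.sum_le_sum fun i _ => hterm i
      _ = T z - T (x k) := by rw [hT]; rw [← Finset.sum_sub_distrib]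
  have hxΩ : ∀ k, x k ∈ Ω := by
    intro k
    induction k with
    | zero => exact hx0
    | succ k _ => exact (hiter k).1
  have hgbd : ∀ L, 0 ≤ L → (∀ u w, |T u - T w| ≤ L * ‖u - w‖) → ∀ k, ‖g k‖ ≤ L :=
    fun L hL hlip k => subdiff_norm_le hL hlip (hsubT k)
  -- key recursion
  have key : ∀ L, 0 ≤ L → (∀ u w, |T u - T w| ≤ L * ‖u - w‖) →
      ∀ s ∈ Ω, ∀ k, ‖x (k+1) - s‖^2 ≤
        ‖x k - s‖^2 - 2 * α k * (T (x k) - T s) + α k ^2 * L^2 := by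
    intro L hL hlip s hs k
    set y := x k - α k • g k with hy
    have hproj : ∀ w ∈ Ω, ⟪y - x (k+1), w - x (k+1)⟫ ≤ 0 := by
      have h2 := (hiter k).2
      rw [Metric.infDist_eq_iInf] at h2
      simp_rw [dist_eq_norm] at h2
      exact (norm_eq_iInf_iff_real_inner_le_zero hΩconv (hiter k).1).1 h2
    have step1 : ‖x (k+1) - s‖^2 ≤ ‖y - s‖^2 := by
      have hd : y - s = (y - x (k+1)) + (x (k+1) - s) := by abel
      rw [hd, norm_add_sq_real]
      have h0 := hproj s hs
      have h5 : ⟪y - x (k+1), x (k+1) - s⟫ = - ⟪y - x (k+1), s - x (k+1)⟫ := by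
        rw [← inner_neg_right]
        congr 1
        abel
      nlinarith [sq_nonneg ‖y - x (k+1)‖]
    have step2 : ‖y - s‖^2 =
        ‖x k - s‖^2 - 2 * α k * ⟪g k, x k - s⟫ + α k^2 * ‖g k‖^2 := by
      have hd : y - s = (x k - s) - α k • g k := by rw [hy]; abel
      rw [hd, norm_sub_sq_real, real_inner_smul_right, norm_smul, Real.norm_eq_abs,
        abs_of_pos (hα k), real_inner_comm (x k - s) (g k)]
      ring
    have step3 : T (x k) - T s ≤ ⟪g k, x k - s⟫ := by
      have h6 := hsubT k s
      have h5 : ⟪g k, s - x k⟫ = - ⟪g k, x k - s⟫ := by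
        rw [← inner_neg_right]
        congr 1
        abel
      rw [h5] at h6
      linarith
    have hgk := hgbd L hL hlip k
    have h7 : α k ^ 2 * ‖g k‖^2 ≤ α k^2 * L^2 := by
      have h8 : ‖g k‖^2 ≤ L^2 := by
        nlinarith [mul_le_mul hgk hgk (norm_nonneg (g k)) hL]
      exact mul_le_mul_of_nonneg_left h8 (sq_nonneg _)
    nlinarith [mul_le_mul_of_nonneg_left step3 (by linarith [hα k] : (0:ℝ) ≤ 2 * α k)]
  -- optimal value facts
  set Vhat := sInf (T '' Ω) with hVhatdef
  have hbddT : BddBelow (T '' Ω) := by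
    obtain ⟨s, hsS⟩ := hSne
    rw [hS] at hsS
    exact ⟨T s, by rintro _ ⟨y, hy, rfl⟩; exact hsS.2 y hy⟩
  have hVhat_le : ∀ z ∈ Ω, Vhat ≤ T z := fun z hz => csInf_le hbddT (Set.mem_image_of_mem T hz)
  have hTs : ∀ s ∈ S, T s = Vhat := by
    intro s hsS
    rw [hS] at hsS
    exact (IsLeast.csInf_eq ⟨Set.mem_image_of_mem T hsS.1,
      by rintro _ ⟨y, hy, rfl⟩; exact hsS.2 y hy⟩).symm
  -- telescoping
  have tele : ∀ L, 0 ≤ L → (∀ u w, |T u - T w| ≤ L * ‖u - w‖) → ∀ s ∈ Ω, ∀ K,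
      2 * ∑ k ∈ Finset.range K, α k * (T (x k) - T s) ≤
        ‖x 0 - s‖^2 - ‖x K - s‖^2 + L^2 * ∑ k ∈ Finset.range K, α k ^2 := by
    intro L hL hlip s hs K
    induction K with
    | zero => simp
    | succ K ih =>
      have hk := key L hL hlip s hs K
      rw [Finset.sum_range_succ, Finset.sum_range_succ]
      nlinarith [ih]
  -- estimate with explicit minimizer
  have est : ∀ L, 0 ≤ L → (∀ u w, |T u - T w| ≤ L * ‖u - w‖) → ∀ s ∈ S, ∀ k,
      V k - Vhat ≤ (‖x 0 - s‖^2 + L^2 * ∑ i ∈ Finset.range (k+1), α i^2)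
        / (2 * ∑ i ∈ Finset.range (k+1), α i) := by
    intro L hL hlip s hsS k
    have hsΩ : s ∈ Ω := by rw [hS] at hsS; exact hsS.1
    have hA : 0 < ∑ i ∈ Finset.range (k+1), α i :=
      Finset.sum_pos (fun i _ => hα i) (by simp)
    rw [le_div_iff₀ (by linarith : (0:ℝ) < 2 * ∑ i ∈ Finset.range (k+1), α i)]
    have hVle : ∀ j, j < k + 1 → V k ≤ T (x j) := by
      intro j hj
      rw [hV k]
      exact ciInf_le (Finite.bddBelow_range _) (⟨j, hj⟩ : Fin (k+1))
    have h2 : ∑ j ∈ Finset.range (k+1), α j * (V k - Vhat) ≤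
        ∑ j ∈ Finset.range (k+1), α j * (T (x j) - T s) := by
      refine Finset.sum_le_sum fun j hj => ?_
      refine mul_le_mul_of_nonneg_left ?_ (hα j).le
      rw [hTs s hsS]
      linarith [hVle j (Finset.mem_range.1 hj)]
    rw [← Finset.sum_mul] at h2
    have h3 := tele L hL hlip s hsΩ (k+1)
    nlinarith [sq_nonneg ‖x (k+1) - s‖]
  -- closedness of S
  have hScl : IsClosed S := by
    have hSeq : S = Ω ∩ ⋂ y ∈ Ω, {z | T z ≤ T y} := by
      rw [hS]
      ext z
      simp only [Set.mem_setOf_eq, Set.mem_inter_iff, Set.mem_iInter, Set.mem_sep_iff]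
    rw [hSeq]
    exact hΩc.inter (isClosed_biInter fun y _ => isClosed_le hTcont continuous_const)
  -- Part 3
  have part3 : ∀ L : ℝ, 0 ≤ L →
      (∀ u w : EuclideanSpace ℝ (Fin m), |T u - T w| ≤ L * ‖u - w‖) →
      ∀ k, V k - Vhat ≤
        (infDist (x 0) S ^ 2 + L ^ 2 * ∑ i ∈ Finset.range (k + 1), α i ^ 2) /
          (2 * ∑ i ∈ Finset.range (k + 1), α i) := by
    intro L hL hlip k
    obtain ⟨s, hsS, hds⟩ := hScl.exists_infDist_eq_dist hSne (x 0)
    have h1 := est L hL hlip s hsS k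
    rw [hds, dist_eq_norm]
    exact h1
  -- Part 2
  obtain ⟨sb, hsbS⟩ := hSne
  have hsbΩ : sb ∈ Ω := by rw [hS] at hsbS; exact hsbS.1
  have hsbS' : sb ∈ S := hsbS
  have hVhat_le_V : ∀ k, Vhat ≤ V k := by
    intro k
    rw [hV k]
    exact le_ciInf fun j => hVhat_le _ (hxΩ j)
  set Csq := ∑' i, α i ^2 with hCsqdef
  have hCsqnn : 0 ≤ Csq := tsum_nonneg fun i => sq_nonneg _
  have hpart : ∀ K, ∑ i ∈ Finset.range K, α i ^2 ≤ Csq :=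
    fun K => hsq.sum_le_tsum _ (fun i _ => sq_nonneg _)
  have hbound : ∀ k, V k - Vhat ≤ (‖x 0 - sb‖^2 + L₀^2 * Csq)
      / (2 * ∑ i ∈ Finset.range (k+1), α i) := by
    intro k
    have hA : 0 < ∑ i ∈ Finset.range (k+1), α i :=
      Finset.sum_pos (fun i _ => hα i) (by simp)
    refine (est L₀ hL₀ hTlip sb hsbS' k).trans ?_
    have hnum : ‖x 0 - sb‖^2 + L₀^2 * ∑ i ∈ Finset.range (k+1), α i^2 ≤
        ‖x 0 - sb‖^2 + L₀^2 * Csq := by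
      have := mul_le_mul_of_nonneg_left (hpart (k+1)) (sq_nonneg L₀)
      linarith
    exact div_le_div_of_nonneg_right hnum (by linarith) |>.trans_eq rfl
  have hAtend : Tendsto (fun k => 2 * ∑ i ∈ Finset.range (k+1), α i) atTop atTop := by
    have h1 : Tendsto (fun k : ℕ => ∑ i ∈ Finset.range (k+1), α i) atTop atTop :=
      hdiv.comp (tendsto_add_atTop_nat 1)
    exact Tendsto.const_mul_atTop two_pos h1
  have hzero : Tendsto
      (fun k => (‖x 0 - sb‖^2 + L₀^2 * Csq) / (2 * ∑ i ∈ Finset.range (k+1), α i))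
      atTop (𝓝 0) :=
    Tendsto.div_atTop tendsto_const_nhds hAtend
  have part2 : Tendsto V atTop (𝓝 Vhat) := by
    rw [← tendsto_sub_nhds_zero_iff]
    exact squeeze_zero (fun k => by linarith [hVhat_le_V k]) hbound hzero
  refine ⟨?_, part2, part3⟩
  -- Part 1
  set δ : ℕ → ℝ := fun k => T (x k) - Vhat with hδ
  have hδnn : ∀ k, 0 ≤ δ k := fun k => by
    have := hVhat_le (x k) (hxΩ k)
    simp only [hδ]
    linarith
  have hTsb : T sb = Vhat := hTs sb hsbS'
  have hC1 : ∀ K, ∑ k ∈ Finset.range K, α k * δ k ≤ (‖x 0 - sb‖^2 + L₀^2 * Csq)/2 := by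
    intro K
    have h3 := tele L₀ hL₀ hTlip sb hsbΩ K
    have heq : ∑ k ∈ Finset.range K, α k * (T (x k) - T sb) =
        ∑ k ∈ Finset.range K, α k * δ k := by
      refine Finset.sum_congr rfl fun k _ => ?_
      simp only [hδ, hTsb]
    rw [heq] at h3
    have h4 := mul_le_mul_of_nonneg_left (hpart K) (sq_nonneg L₀)
    nlinarith [sq_nonneg ‖x K - sb‖]
  have hfreq : ∀ ε : ℝ, 0 < ε → ∀ N : ℕ, ∃ k, N ≤ k ∧ δ k < ε := by
    intro ε hε N
    by_contra hcon
    push_neg at hcon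
    set B := (‖x 0 - sb‖^2 + L₀^2 * Csq)/2 with hB
    have hBnn : 0 ≤ B := by positivity
    obtain ⟨K, hK⟩ :=
      (hdiv.eventually_ge_atTop ((∑ k ∈ Finset.range N, α k) + (B + 1)/ε)).exists
    have hKN : N ≤ K := by
      by_contra hKN
      push_neg at hKN
      have hmono : ∑ k ∈ Finset.range K, α k ≤ ∑ k ∈ Finset.range N, α k :=
        Finset.sum_le_sum_of_subset_of_nonneg
          (Finset.range_subset_range.2 hKN.le) (fun i _ _ => (hα i).le)
      have : 0 < (B + 1)/ε := by positivity
      linarith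
    have h1 : ε * ((∑ k ∈ Finset.range K, α k) - ∑ k ∈ Finset.range N, α k) ≤
        ∑ k ∈ Finset.range K, α k * δ k := by
      have hic : (∑ k ∈ Finset.range K, α k) - ∑ k ∈ Finset.range N, α k =
          ∑ k ∈ Finset.Ico N K, α k := (Finset.sum_Ico_eq_sub _ hKN).symm
      rw [hic, Finset.mul_sum]
      have hsub : ∑ k ∈ Finset.Ico N K, ε * α k ≤ ∑ k ∈ Finset.Ico N K, α k * δ k := by
        refine Finset.sum_le_sum fun k hk => ?_
        have hNk := (Finset.mem_Ico.1 hk).1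
        have hεδ := hcon k hNk
        calc ε * α k = α k * ε := mul_comm _ _
          _ ≤ α k * δ k := mul_le_mul_of_nonneg_left hεδ (hα k).le
      refine hsub.trans ?_
      refine Finset.sum_le_sum_of_subset_of_nonneg ?_
        (fun i _ _ => mul_nonneg (hα i).le (hδnn i))
      intro i hi
      rw [Finset.mem_range]
      exact (Finset.mem_Ico.1 hi).2
    have h2 := hC1 K
    have h5 : ε * ((B+1)/ε) = B + 1 := mul_div_cancel₀ _ hε.ne'
    have h6 : ε * ((B + 1)/ε) ≤
        ε * ((∑ k ∈ Finset.range K, α k) - ∑ k ∈ Finset.range N, α k) :=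
      mul_le_mul_of_nonneg_left (by linarith) hε.le
    rw [h5] at h6
    linarith
  have hP : ∀ nn : ℕ, ∃ᶠ k in atTop, δ k < 1/((nn:ℝ)+1) := by
    intro nn
    rw [Filter.frequently_atTop]
    intro a
    obtain ⟨k, hk1, hk2⟩ := hfreq (1/((nn:ℝ)+1)) (by positivity) a
    exact ⟨k, hk1, hk2⟩
  obtain ⟨φ, hφmono, hφ⟩ := Filter.extraction_forall_of_frequently hP
  have hδφ : Tendsto (fun nn => δ (φ nn)) atTop (𝓝 0) := by
    refine squeeze_zero (fun nn => hδnn _) (fun nn => (hφ nn).le) ?_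
    exact tendsto_one_div_add_atTop_nhds_zero_nat
  -- boundedness of the iterates
  have hbdd' : ∀ k, ‖x k - sb‖^2 ≤ ‖x 0 - sb‖^2 + L₀^2 * ∑ i ∈ Finset.range k, α i^2 := by
    intro k
    induction k with
    | zero => simp
    | succ k ih =>
      have hk := key L₀ hL₀ hTlip sb hsbΩ k
      have hδk : 0 ≤ T (x k) - T sb := by rw [hTsb]; exact hδnn k
      rw [Finset.sum_range_succ]
      nlinarith [mul_nonneg (hα k).le hδk]
  set R := Real.sqrt (‖x 0 - sb‖^2 + L₀^2 * Csq) with hR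
  have hmem : ∀ k, x k ∈ Metric.closedBall sb R := by
    intro k
    rw [Metric.mem_closedBall, dist_eq_norm]
    have h1 : ‖x k - sb‖^2 ≤ ‖x 0 - sb‖^2 + L₀^2 * Csq := by
      have h4 := mul_le_mul_of_nonneg_left (hpart k) (sq_nonneg L₀)
      linarith [hbdd' k]
    have h2 := Real.sqrt_le_sqrt h1
    rwa [Real.sqrt_sq (norm_nonneg _)] at h2
  obtain ⟨xbar, _, ψ, hψmono, hψconv⟩ :=
    tendsto_subseq_of_bounded isBounded_closedBall (fun nn : ℕ => hmem (φ nn))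
  have hconv : Tendsto (fun l => x (φ (ψ l))) atTop (𝓝 xbar) := hψconv
  have hxbarΩ : xbar ∈ Ω :=
    hΩc.mem_of_tendsto hconv (Filter.Eventually.of_forall fun l => hxΩ _)
  have hδsub : Tendsto (fun l => δ (φ (ψ l))) atTop (𝓝 0) :=
    hδφ.comp hψmono.tendsto_atTop
  have hTconv : Tendsto (fun l => T (x (φ (ψ l)))) atTop (𝓝 (T xbar)) :=
    (hTcont.tendsto xbar).comp hconv
  have hTxbar : T xbar = Vhat := by
    have h1 : Tendsto (fun l => T (x (φ (ψ l)))) atTop (𝓝 Vhat) := by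
      have heq : (fun l => T (x (φ (ψ l)))) = fun l => δ (φ (ψ l)) + Vhat := by
        funext l
        simp only [hδ]
        ring
      rw [heq]
      simpa using hδsub.add_const Vhat
    exact tendsto_nhds_unique hTconv h1
  have hxbarS : xbar ∈ S := by
    rw [hS]
    exact ⟨hxbarΩ, fun y hy => by rw [hTxbar]; exact hVhat_le y hy⟩
  -- convergence of ‖x k - xbar‖²
  set a : ℕ → ℝ := fun k => ‖x k - xbar‖^2 with ha
  have hrec : ∀ k, a (k+1) ≤ a k + α k^2 * L₀^2 := by
    intro k
    have hk := key L₀ hL₀ hTlip xbar hxbarΩ k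
    have h1 : 0 ≤ T (x k) - T xbar := by rw [hTxbar]; exact hδnn k
    simp only [ha]
    nlinarith [mul_nonneg (hα k).le h1]
  set c : ℕ → ℝ := fun K => L₀^2 * ∑ i ∈ Finset.range K, α i^2 with hc
  have hdanti : Antitone (fun k => a k - c k) := by
    apply antitone_nat_of_succ_le
    intro k
    have h1 := hrec k
    simp only [hc, Finset.sum_range_succ]
    nlinarith
  have hdbdd : BddBelow (Set.range (fun k => a k - c k)) := by
    refine ⟨-(L₀^2 * Csq), ?_⟩
    rintro _ ⟨k, rfl⟩
    have h1 : c k ≤ L₀^2 * Csq := mul_le_mul_of_nonneg_left (hpart k) (sq_nonneg _)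
    have h2 : 0 ≤ a k := sq_nonneg _
    simp only
    linarith
  have hd : Tendsto (fun k => a k - c k) atTop (𝓝 (⨅ k, a k - c k)) :=
    tendsto_atTop_ciInf hdanti hdbdd
  have hcconv : Tendsto c atTop (𝓝 (L₀^2 * Csq)) := by
    have := hsq.hasSum.tendsto_sum_nat.const_mul (L₀^2)
    simpa [hc, hCsqdef] using this
  have haconv : Tendsto a atTop (𝓝 ((⨅ k, a k - c k) + L₀^2 * Csq)) := by
    have := hd.add hcconv
    simpa using this
  have hasub : Tendsto (fun l => a (φ (ψ l))) atTop (𝓝 0) := by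
    have hcont : Continuous fun z : EuclideanSpace ℝ (Fin m) => ‖z - xbar‖^2 :=
      ((continuous_id.sub continuous_const).norm.pow 2)
    have h1 := (hcont.tendsto xbar).comp hconv
    simpa [ha, Function.comp_def] using h1
  have hasub' : Tendsto (fun l => a (φ (ψ l))) atTop
      (𝓝 ((⨅ k, a k - c k) + L₀^2 * Csq)) :=
    haconv.comp ((hφmono.comp hψmono).tendsto_atTop)
  have hlim0 : (⨅ k, a k - c k) + L₀^2 * Csq = 0 := tendsto_nhds_unique hasub' hasub
  rw [hlim0] at haconv
  have hxconv : Tendsto x atTop (𝓝 xbar) := by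
    rw [tendsto_iff_dist_tendsto_zero]
    have heq : (fun k => dist (x k) xbar) = fun k => Real.sqrt (a k) := by
      funext k
      rw [dist_eq_norm]
      simp only [ha]
      rw [Real.sqrt_sq (norm_nonneg _)]
    rw [heq]
    have h1 := (Real.continuous_sqrt.tendsto 0).comp haconv
    simpa [Function.comp_def] using h1
  exact ⟨xbar, hxbarS, hxconv⟩
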